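/- Let 0 < γ_min ≤ γ ≤ γ_max, 0 < θ_min ≤ θ ≤ θ_max, a < g(γ_min, θ_max), b > g(γ_max, θ_min), and x₀ > 0. For any sequences (γ_j) in [γ_min, γ_max] and (θ_j) in [θ_min, θ_max], define x_{j+1} = x_j/(1+θ_j x_j) + 2γ_j. Then there exists N (depending only on x₀, a, b and the bounds) such that x_j ∈ [a,b] for all j ≥ N. -/

import Mathlib

set_option maxHeartbeats 4000000

noncomputable def gFix (γ θ : ℝ) : ℝ := γ + Real.sqrt (γ ^ 2 + 2 * γ / θ)

lemma gFix_pos {γ θ : ℝ} (hγ : 0 < γ) : 0 < gFix γ θ := by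
  unfold gFix; positivity

lemma gFix_fixed {γ θ : ℝ} (hγ : 0 < γ) (hθ : 0 < θ) :
    gFix γ θ / (1 + θ * gFix γ θ) + 2 * γ = gFix γ θ := by
  have hnn : (0:ℝ) ≤ γ ^ 2 + 2 * γ / θ := by positivity
  have hs := Real.sq_sqrt hnn
  have hsnn := Real.sqrt_nonneg (γ ^ 2 + 2 * γ / θ)
  set s := Real.sqrt (γ ^ 2 + 2 * γ / θ) with hsdef
  have hg : gFix γ θ = γ + s := rfl
  have hden : 0 < 1 + θ * gFix γ θ := by
    have := gFix_pos (θ := θ) hγ; nlinarith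
  rw [hg] at hden ⊢
  have hs' : θ * s ^ 2 = θ * γ ^ 2 + 2 * γ := by
    rw [hs]; field_simp
  field_simp
  nlinarith [hs']

lemma gFix_mono {γ₁ γ₂ θ₁ θ₂ : ℝ} (h1 : 0 < γ₁) (h2 : γ₁ ≤ γ₂) (h3 : 0 < θ₂)
    (h4 : θ₂ ≤ θ₁) : gFix γ₁ θ₁ ≤ gFix γ₂ θ₂ := by
  unfold gFix
  have h1' : 0 < θ₁ := lt_of_lt_of_le h3 h4
  apply add_le_add h2
  apply Real.sqrt_le_sqrt
  have : 2 * γ₁ / θ₁ ≤ 2 * γ₂ / θ₂ := by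
    apply div_le_div₀ (by linarith) (by linarith) h3 h4
  nlinarith

/-- For any a < g(γ_min, θ_max), b > g(γ_max, θ_min) and x₀ > 0,
there is N (depending only on x₀, a, b and the bounds) such that every orbit of
the non-autonomous recursion starting at x₀ lies in [a,b] from time N on. -/
theorem stmt_5 (γmin γmax θmin θmax a b x₀ : ℝ)
    (hγ : 0 < γmin) (hγ' : γmin ≤ γmax) (hθ : 0 < θmin) (hθ' : θmin ≤ θmax)
    (ha : a < gFix γmin θmax) (hb : gFix γmax θmin < b) (hx₀ : 0 < x₀) :
    ∃ N : ℕ, ∀ (γs θs x : ℕ → ℝ),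
      (∀ j, γs j ∈ Set.Icc γmin γmax) → (∀ j, θs j ∈ Set.Icc θmin θmax) →
      x 0 = x₀ → (∀ j, x (j + 1) = x j / (1 + θs j * x j) + 2 * γs j) →
      ∀ j, N ≤ j → x j ∈ Set.Icc a b := by
  have hγmax : 0 < γmax := lt_of_lt_of_le hγ hγ'
  have hθmax : 0 < θmax := lt_of_lt_of_le hθ hθ'
  set glo := gFix γmin θmax with hglo
  set ghi := gFix γmax θmin with hghi
  have hglopos : 0 < glo := gFix_pos hγ
  have hghipos : 0 < ghi := gFix_pos hγmax
  have hgg : glo ≤ ghi := gFix_mono hγ hγ' hθ hθ'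
  set M : ℝ := 1 / θmin + 2 * γmax with hM
  have hMpos : 0 < M := by positivity
  set k : ℝ := 1 + θmin * (2 * γmin) with hk
  have hk1 : 1 < k := by nlinarith
  have hkpos : 0 < k := by linarith
  set D : ℝ := M + ghi with hD
  have hDpos : 0 < D := by positivity
  set ε : ℝ := min (glo - a) (b - ghi) with hε
  have hεpos : 0 < ε := by
    apply lt_min <;> linarith
  -- choose n with (1/k)^n < ε / D
  have hq1 : (1:ℝ)/k < 1 := by
    rw [div_lt_one hkpos]; exact hk1
  have hq0 : 0 ≤ (1:ℝ)/k := by positivity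
  obtain ⟨n, hn⟩ := exists_pow_lt_of_lt_one (div_pos hεpos hDpos) hq1
  have hn' : (1/k)^n * D < ε := by
    rw [← lt_div_iff₀ hDpos]; exact hn
  clear_value glo ghi M k D ε
  refine ⟨n + 1, ?_⟩
  intro γs θs x hγs hθs hx0 hrec j hj
  -- key invariant
  have key : ∀ m : ℕ, 2 * γmin ≤ x (m + 1) ∧ x (m + 1) ≤ M ∧
      glo - x (m + 1) ≤ (1/k)^m * D ∧ x (m + 1) - ghi ≤ (1/k)^m * D := by
    intro m
    induction m with
    | zero =>
      have hx1 := hrec 0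
      rw [hx0] at hx1
      obtain ⟨hγl, hγu⟩ := hγs 0
      obtain ⟨hθl, hθu⟩ := hθs 0
      have hθ0 : 0 < θs 0 := lt_of_lt_of_le hθ hθl
      have hden : 0 < 1 + θs 0 * x₀ := by nlinarith
      have h1 : 0 ≤ x₀ / (1 + θs 0 * x₀) := by positivity
      have h2 : x₀ / (1 + θs 0 * x₀) ≤ 1 / θmin := by
        rw [div_le_div_iff₀ hden hθ]
        nlinarith
      refine ⟨by rw [hx1]; linarith, by rw [hx1]; linarith, ?_, ?_⟩
      · simp only [pow_zero, one_mul]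
        rw [hx1]
        have : glo ≤ D := by simp only [hD]; linarith
        linarith
      · simp only [pow_zero, one_mul]
        rw [hx1]
        have : x₀ / (1 + θs 0 * x₀) + 2 * γs 0 ≤ M := by linarith
        simp only [hD]; linarith
    | succ m ih =>
      obtain ⟨hyl, hyu, hlo, hhi⟩ := ih
      set y := x (m + 1) with hy
      have hypos : 0 < y := by linarith
      obtain ⟨hγl, hγu⟩ := hγs (m + 1)
      obtain ⟨hθl, hθu⟩ := hθs (m + 1)
      have hθj : 0 < θs (m + 1) := lt_of_lt_of_le hθ hθl
      have hden : 0 < 1 + θs (m + 1) * y := by nlinarith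
      have hdenmax : 0 < 1 + θmax * y := by nlinarith
      have hdenmin : 0 < 1 + θmin * y := by nlinarith
      have hdglo : 0 < 1 + θmax * glo := by nlinarith
      have hdghi : 0 < 1 + θmin * ghi := by nlinarith
      have hx2 := hrec (m + 1)
      rw [← hy] at hx2
      have h1 : 0 ≤ y / (1 + θs (m + 1) * y) := by positivity
      have h2 : y / (1 + θs (m + 1) * y) ≤ 1 / θmin := by
        rw [div_le_div_iff₀ hden hθ]; nlinarith
      have hpow : (0:ℝ) ≤ (1/k)^m * D := by positivity
      refine ⟨by rw [hx2]; linarith, by rw [hx2]; linarith, ?_, ?_⟩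
      · -- lower bound: glo - x(m+2) ≤ (1/k)^(m+1) * D
        have hstep1 : y / (1 + θmax * y) ≤ y / (1 + θs (m + 1) * y) := by
          apply div_le_div_of_nonneg_left (le_of_lt hypos) hden
          nlinarith
        have hfix := gFix_fixed (θ := θmax) hγ hθmax
        rw [← hglo] at hfix
        have hid : glo / (1 + θmax * glo) - y / (1 + θmax * y)
            = (glo - y) / ((1 + θmax * glo) * (1 + θmax * y)) := by
          field_simp; ring
        have hdiff : glo - (y / (1 + θmax * y) + 2 * γmin)
            = (glo - y) / ((1 + θmax * glo) * (1 + θmax * y)) := by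
          rw [← hid]; linarith
        have hle : glo - x (m + 1 + 1) ≤ (glo - y) / ((1 + θmax * glo) * (1 + θmax * y)) := by
          rw [← hdiff, hx2]; linarith
        rcases le_or_gt glo y with h | h
        · have : (glo - y) / ((1 + θmax * glo) * (1 + θmax * y)) ≤ 0 := by
            apply div_nonpos_of_nonpos_of_nonneg (by linarith) (by positivity)
          have hpow' : (0:ℝ) ≤ (1/k)^(m+1) * D := by positivity
          linarith
        · have e1 : (1:ℝ) ≤ 1 + θmax * glo := by linarith [mul_pos hθmax hglopos]
          have e2 : k ≤ 1 + θmax * y := by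
            have := mul_le_mul hθ' hyl (by positivity) (le_of_lt hθmax)
            simp only [hk]; linarith
          have hdenbig : k ≤ (1 + θmax * glo) * (1 + θmax * y) := by
            have := mul_le_mul e1 e2 (le_of_lt hkpos) (by linarith)
            linarith [one_mul k]
          have h3 : (glo - y) / ((1 + θmax * glo) * (1 + θmax * y)) ≤ (glo - y) / k := by
            apply div_le_div_of_nonneg_left (by linarith) hkpos hdenbig
          have h4 : (glo - y) / k ≤ ((1/k)^m * D) / k := by
            exact (div_le_div_iff_of_pos_right hkpos).mpr (by linarith)
          have h5 : ((1/k)^m * D) / k = (1/k)^(m+1) * D := by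
            rw [pow_succ]; field_simp
          linarith
      · -- upper bound: x(m+2) - ghi ≤ (1/k)^(m+1) * D
        have hstep1 : y / (1 + θs (m + 1) * y) ≤ y / (1 + θmin * y) := by
          apply div_le_div_of_nonneg_left (le_of_lt hypos) hdenmin
          nlinarith
        have hfix := gFix_fixed (θ := θmin) hγmax hθ
        rw [← hghi] at hfix
        have hid : y / (1 + θmin * y) - ghi / (1 + θmin * ghi)
            = (y - ghi) / ((1 + θmin * y) * (1 + θmin * ghi)) := by
          field_simp; ring
        have hdiff : (y / (1 + θmin * y) + 2 * γmax) - ghi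
            = (y - ghi) / ((1 + θmin * y) * (1 + θmin * ghi)) := by
          rw [← hid]; linarith
        have hle : x (m + 1 + 1) - ghi ≤ (y - ghi) / ((1 + θmin * y) * (1 + θmin * ghi)) := by
          rw [← hdiff, hx2]; linarith
        rcases le_or_gt y ghi with h | h
        · have : (y - ghi) / ((1 + θmin * y) * (1 + θmin * ghi)) ≤ 0 := by
            apply div_nonpos_of_nonpos_of_nonneg (by linarith) (by positivity)
          have hpow' : (0:ℝ) ≤ (1/k)^(m+1) * D := by positivity
          linarith
        · have e1 : (1:ℝ) ≤ 1 + θmin * ghi := by linarith [mul_pos hθ hghipos]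
          have e2 : k ≤ 1 + θmin * y := by
            have := mul_le_mul_of_nonneg_left hyl (le_of_lt hθ)
            simp only [hk]; linarith
          have hdenbig : k ≤ (1 + θmin * y) * (1 + θmin * ghi) := by
            have := mul_le_mul e2 e1 (by linarith) (by linarith)
            linarith [mul_one (1 + θmin * y), mul_one k]
          have h3 : (y - ghi) / ((1 + θmin * y) * (1 + θmin * ghi)) ≤ (y - ghi) / k := by
            apply div_le_div_of_nonneg_left (by linarith) hkpos hdenbig
          have h4 : (y - ghi) / k ≤ ((1/k)^m * D) / k := by
            exact (div_le_div_iff_of_pos_right hkpos).mpr (by linarith)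
          have h5 : ((1/k)^m * D) / k = (1/k)^(m+1) * D := by
            rw [pow_succ]; field_simp
          linarith
  -- conclude
  obtain ⟨m, rfl⟩ : ∃ m, j = m + 1 := ⟨j - 1, by omega⟩
  have hm : n ≤ m := by omega
  obtain ⟨_, _, hlo, hhi⟩ := key m
  have hmono : (1/k)^m ≤ (1/k)^n := pow_le_pow_of_le_one hq0 (le_of_lt hq1) hm
  have hbd : (1/k)^m * D ≤ (1/k)^n * D :=
    mul_le_mul_of_nonneg_right hmono hDpos.le
  have hε1 : ε ≤ glo - a := by rw [hε]; exact min_le_left _ _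
  have hε2 : ε ≤ b - ghi := by rw [hε]; exact min_le_right _ _
  constructor
  · linarith
  · linarith
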